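/- arXiv:2406.19027 — 2 statements merged into one kernel-verified Lean document; each statement's English description precedes it below -/
import Mathlib

section
/- Let φ : [0,∞) → ℝ be continuous with positive bounds, Φ(s) = ∫₀^s φ(τ)dτ, and suppose s ↦ Φ(s²) is strictly convex on ℝ. Define β : ℝ^{N+1} → ℝ^{N+1} by β(η) = φ(|η|²/2)·η. Then β is strictly monotone: for all η ≠ η₁ in ℝ^{N+1}, ⟨β(η) − β(η₁), η − η₁⟩ > 0. -/
open MeasureTheory RealInnerProductSpace

theorem stmt1 (N : ℕ) (φ : ℝ → ℝ) (φmin φmax : ℝ)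
    (hcont : ContinuousOn φ (Set.Ici 0))
    (hmin : 0 < φmin)
    (hbd : ∀ s : ℝ, 0 ≤ s → φmin ≤ φ s ∧ φ s ≤ φmax)
    (Φ : ℝ → ℝ) (hΦ : ∀ s, Φ s = ∫ τ in (0:ℝ)..s, φ τ)
    (hconv : StrictConvexOn ℝ Set.univ (fun s : ℝ => Φ (s ^ 2)))
    (β : EuclideanSpace ℝ (Fin (N + 1)) → EuclideanSpace ℝ (Fin (N + 1)))
    (hβ : ∀ η, β η = φ (‖η‖ ^ 2 / 2) • η) :
    ∀ η η₁ : EuclideanSpace ℝ (Fin (N + 1)), η ≠ η₁ →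
      0 < ⟪β η - β η₁, η - η₁⟫ := by
  -- derivative of G(s) = Φ(s^2) at s > 0 is 2 s φ(s^2)
  have hInt : ∀ a b : ℝ, 0 ≤ a → 0 ≤ b → IntervalIntegrable φ volume a b := by
    intro a b ha hb
    apply (hcont.mono ?_).intervalIntegrable
    intro t ht
    rcases Set.mem_uIcc.1 ht with ⟨h1, _⟩ | ⟨h1, _⟩ <;>
      exact Set.mem_Ici.2 (by linarith)
  have hG : ∀ s : ℝ, 0 < s →
      HasDerivAt (fun s : ℝ => Φ (s ^ 2)) (2 * s * φ (s ^ 2)) s := by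
    intro s hs
    have hΦd : HasDerivAt Φ (φ (s ^ 2)) (s ^ 2) := by
      have hca : ContinuousAt φ (s ^ 2) :=
        hcont.continuousAt (Ici_mem_nhds (by positivity))
      have := intervalIntegral.integral_hasDerivAt_right
        (hInt 0 (s ^ 2) le_rfl (by positivity))
        ((hcont.mono Set.Ioi_subset_Ici_self).stronglyMeasurableAtFilter isOpen_Ioi
          (s ^ 2) (Set.mem_Ioi.2 (by positivity))) hca
      have heq : (fun u => ∫ τ in (0:ℝ)..u, φ τ) = Φ := by
        funext u; rw [hΦ u]
      rwa [heq] at this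
    have hsq : HasDerivAt (fun s : ℝ => s ^ 2) (2 * s) s := by
      simpa using (hasDerivAt_pow 2 s)
    have hcomp : HasDerivAt (Φ ∘ fun s : ℝ => s ^ 2) (φ (s ^ 2) * (2 * s)) s :=
      HasDerivAt.comp (h₂ := Φ) (h := fun s : ℝ => s ^ 2)
        (h₂' := φ (s ^ 2)) (h' := 2 * s) s hΦd hsq
    have : HasDerivAt (fun s : ℝ => Φ (s ^ 2)) (φ (s ^ 2) * (2 * s)) s := hcomp
    simpa [mul_comm, mul_assoc, mul_left_comm] using this
  -- key monotonicity: for 0 ≤ b < a, b * φ (b^2/2) < a * φ (a^2/2)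
  have key : ∀ a b : ℝ, 0 ≤ b → b < a → b * φ (b ^ 2 / 2) < a * φ (a ^ 2 / 2) := by
    intro a b hb hba
    have ha : 0 < a := lt_of_le_of_lt hb hba
    have hφa : 0 < φ (a ^ 2 / 2) := lt_of_lt_of_le hmin (hbd _ (by positivity)).1
    rcases eq_or_lt_of_le hb with hb0 | hb0
    · rw [← hb0]; simp; positivity
    · -- 0 < b < a; use strict convexity of G at x = b/√2 < y = a/√2
      set x := b / Real.sqrt 2 with hx
      set y := a / Real.sqrt 2 with hy
      have h2 : (0:ℝ) < Real.sqrt 2 := by positivity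
      have hxpos : 0 < x := by positivity
      have hxy : x < y := by exact div_lt_div_of_pos_right hba h2
      have hx2 : x ^ 2 = b ^ 2 / 2 := by
        rw [hx, div_pow, Real.sq_sqrt (by norm_num)]
      have hy2 : y ^ 2 = a ^ 2 / 2 := by
        rw [hy, div_pow, Real.sq_sqrt (by norm_num)]
      have h1 : 2 * x * φ (x ^ 2) < slope (fun s : ℝ => Φ (s ^ 2)) x y :=
        hconv.lt_slope_of_hasDerivAt (Set.mem_univ x) (Set.mem_univ y) hxy
          (hG x hxpos)
      have h2' : slope (fun s : ℝ => Φ (s ^ 2)) x y < 2 * y * φ (y ^ 2) :=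
        hconv.slope_lt_of_hasDerivAt (Set.mem_univ x) (Set.mem_univ y) hxy
          (hG y (lt_trans hxpos hxy))
      have h3 : 2 * x * φ (x ^ 2) < 2 * y * φ (y ^ 2) := lt_trans h1 h2'
      rw [hx2, hy2, hx, hy] at h3
      have h4 : b * φ (b ^ 2 / 2) / Real.sqrt 2 < a * φ (a ^ 2 / 2) / Real.sqrt 2 := by
        have := (mul_lt_mul_iff_right₀ (show (0:ℝ) < 2⁻¹ by norm_num)).2 h3
        calc b * φ (b ^ 2 / 2) / Real.sqrt 2
            = 2⁻¹ * (2 * (b / Real.sqrt 2) * φ (b ^ 2 / 2)) := by ring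
          _ < 2⁻¹ * (2 * (a / Real.sqrt 2) * φ (a ^ 2 / 2)) := this
          _ = a * φ (a ^ 2 / 2) / Real.sqrt 2 := by ring
      exact (div_lt_div_iff_of_pos_right h2).1 h4
  -- main argument
  intro η η₁ hne
  set a := ‖η‖ with ha
  set b := ‖η₁‖ with hb
  set A := φ (a ^ 2 / 2) with hA
  set B := φ (b ^ 2 / 2) with hB
  have hA0 : 0 < A := lt_of_lt_of_le hmin (hbd _ (by positivity)).1
  have hB0 : 0 < B := lt_of_lt_of_le hmin (hbd _ (by positivity)).1
  have hCS : ⟪η, η₁⟫ ≤ a * b := real_inner_le_norm η η₁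
  have hexp : ⟪β η - β η₁, η - η₁⟫
      = A * a ^ 2 + B * b ^ 2 - (A + B) * ⟪η, η₁⟫ := by
    rw [hβ, hβ]
    simp only [inner_sub_left, inner_sub_right, real_inner_smul_left]
    rw [real_inner_self_eq_norm_sq, real_inner_self_eq_norm_sq,
      real_inner_comm η₁ η]
    ring
  rw [hexp]
  rcases eq_or_ne a b with hab | hab
  · -- equal norms
    have hAB : A = B := by rw [hA, hB, hab]
    have hnorm : 0 < ‖η - η₁‖ ^ 2 := by
      have h := norm_sub_pos_iff.mpr hne
      positivity
    have hns : ‖η - η₁‖ ^ 2 = a ^ 2 + b ^ 2 - 2 * ⟪η, η₁⟫ := by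
      rw [norm_sub_sq_real, ha, hb]; ring
    rw [hns] at hnorm
    calc (0:ℝ) < A * (a ^ 2 + b ^ 2 - 2 * ⟪η, η₁⟫) := by
          exact mul_pos hA0 hnorm
      _ = A * a ^ 2 + B * b ^ 2 - (A + B) * ⟪η, η₁⟫ := by
          rw [hAB]; ring
  · -- distinct norms
    have h1 : (A * a - B * b) * (a - b) > 0 := by
      rcases lt_or_gt_of_ne hab with h | h
      · have := key b a (norm_nonneg η) h
        have hlt : A * a < B * b := by
          rw [hA, hB]; nlinarith [this]
        nlinarith
      · have := key a b (norm_nonneg η₁) h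
        have hlt : B * b < A * a := by
          rw [hA, hB]; nlinarith [this]
        nlinarith
    nlinarith [mul_nonneg (le_of_lt (add_pos hA0 hB0)) (sub_nonneg.2 hCS),
      hCS, add_pos hA0 hB0]
end

section
/- Assume φ₁, φ₂ : [0,∞) → ℝ are continuous with positive bounds and s ↦ Φᵢ(s²) is strictly convex for i = 1, 2. Then the Gâteaux derivative I₁' of I₁ on W = H₀¹(Ω)² is strictly monotone: for all (u,v) ≠ (ū,v̄) in W, ⟨I₁'(u,v) − I₁'(ū,v̄), (u,v) − (ū,v̄)⟩ > 0. -/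
open MeasureTheory RealInnerProductSpace

/-- Integrand of `⟨I₁'(u,v) − I₁'(ū,v̄), (u,v) − (ū,v̄)⟩`. -/
noncomputable def monoIntegrand {N : ℕ} (φ₁ φ₂ : ℝ → ℝ)
    (u v u' v' : EuclideanSpace ℝ (Fin N) → ℝ)
    (gu gv gu' gv' : EuclideanSpace ℝ (Fin N) → EuclideanSpace ℝ (Fin N))
    (x : EuclideanSpace ℝ (Fin N)) : ℝ :=
  φ₁ ((u x ^ 2 + ‖gu x‖ ^ 2) / 2) * (u x * (u x - u' x) + ⟪gu x, gu x - gu' x⟫)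
    - φ₁ ((u' x ^ 2 + ‖gu' x‖ ^ 2) / 2) * (u' x * (u x - u' x) + ⟪gu' x, gu x - gu' x⟫)
    + φ₂ ((v x ^ 2 + ‖gv x‖ ^ 2) / 2) * (v x * (v x - v' x) + ⟪gv x, gv x - gv' x⟫)
    - φ₂ ((v' x ^ 2 + ‖gv' x‖ ^ 2) / 2) * (v' x * (v x - v' x) + ⟪gv' x, gv x - gv' x⟫)


/-- strict monotonicity of `t ↦ t * φ (t^2/2)` on `[0,∞)`. -/
lemma psi_strictMonoOn (φ : ℝ → ℝ) (φ0 : ℝ) (h0 : 0 < φ0)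
    (hc : ContinuousOn φ (Set.Ici 0)) (hb : ∀ s : ℝ, 0 ≤ s → φ0 ≤ φ s)
    (Φ : ℝ → ℝ) (hΦ : ∀ s, Φ s = ∫ τ in (0:ℝ)..s, φ τ)
    (hconv : StrictConvexOn ℝ Set.univ (fun s : ℝ => Φ (s ^ 2))) :
    StrictMonoOn (fun t : ℝ => t * φ (t ^ 2 / 2)) (Set.Ici 0) := by
  have hΦfun : Φ = fun s => ∫ τ in (0:ℝ)..s, φ τ := funext hΦ
  have hFTC : ∀ x : ℝ, 0 < x → HasDerivAt Φ (φ x) x := by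
    intro x hx
    rw [hΦfun]
    apply intervalIntegral.integral_hasDerivAt_right
    · exact (hc.mono
        (by simpa [Set.uIcc_of_le hx.le] using Set.Icc_subset_Ici_self)).intervalIntegrable
    · exact ⟨Set.Ioi 0, Ioi_mem_nhds hx,
        (hc.mono Set.Ioi_subset_Ici_self).aestronglyMeasurable measurableSet_Ioi⟩
    · exact (hc x hx.le).continuousAt (Ici_mem_nhds hx)
  have hD : ∀ s : ℝ, 0 < s → HasDerivAt (fun s : ℝ => Φ (s ^ 2)) (2 * (s * φ (s ^ 2))) s := by
    intro s hs
    have h1 := (hFTC (s ^ 2) (by positivity)).comp s (hasDerivAt_pow 2 s)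
    exact h1.congr_deriv (by norm_num; ring)
  have hmono2 : ∀ s s' : ℝ, 0 < s → s < s' → s * φ (s ^ 2) < s' * φ (s' ^ 2) := by
    intro s s' hs hss'
    have h1 := hconv.lt_slope_of_hasDerivAt (Set.mem_univ s) (Set.mem_univ s') hss' (hD s hs)
    have h2 := hconv.convexOn.slope_le_of_hasDerivAt (Set.mem_univ s) (Set.mem_univ s') hss'
      (hD s' (hs.trans hss'))
    have := h1.trans_le h2
    linarith
  intro t ht t' ht' htt'
  simp only
  have hc2 : (0:ℝ) < Real.sqrt 2 := by positivity
  have hsq : (Real.sqrt 2) ^ 2 = 2 := Real.sq_sqrt (by norm_num)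
  rcases eq_or_lt_of_le (Set.mem_Ici.mp ht : (0:ℝ) ≤ t) with h | h
  · -- t = 0
    rw [← h]
    have ht'0 : 0 < t' := by linarith
    have hφ : 0 < φ (t' ^ 2 / 2) := h0.trans_le (hb _ (by positivity))
    have : 0 < t' * φ (t' ^ 2 / 2) := mul_pos ht'0 hφ
    simpa using this
  · have key := hmono2 (t / Real.sqrt 2) (t' / Real.sqrt 2) (by positivity)
      ((div_lt_div_iff_of_pos_right hc2).mpr htt')
    have e1 : (t / Real.sqrt 2) ^ 2 = t ^ 2 / 2 := by
      rw [div_pow, hsq]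
    have e2 : (t' / Real.sqrt 2) ^ 2 = t' ^ 2 / 2 := by
      rw [div_pow, hsq]
    rw [e1, e2] at key
    have := mul_lt_mul_of_pos_right key hc2
    have ha : t / Real.sqrt 2 * φ (t ^ 2 / 2) * Real.sqrt 2 = t * φ (t ^ 2 / 2) := by
      field_simp
    have hb' : t' / Real.sqrt 2 * φ (t' ^ 2 / 2) * Real.sqrt 2 = t' * φ (t' ^ 2 / 2) := by
      field_simp
    rwa [ha, hb'] at this


lemma key_pointwise {E : Type*} [NormedAddCommGroup E] [InnerProductSpace ℝ E]
    (φ : ℝ → ℝ) (φ0 : ℝ) (h0 : 0 < φ0) (hb : ∀ s : ℝ, 0 ≤ s → φ0 ≤ φ s)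
    (hmono : StrictMonoOn (fun t : ℝ => t * φ (t ^ 2 / 2)) (Set.Ici 0))
    (p q : ℝ) (g g' : E) :
    0 ≤ φ ((p ^ 2 + ‖g‖ ^ 2) / 2) * (p * (p - q) + ⟪g, g - g'⟫)
        - φ ((q ^ 2 + ‖g'‖ ^ 2) / 2) * (q * (p - q) + ⟪g', g - g'⟫)
    ∧ (φ ((p ^ 2 + ‖g‖ ^ 2) / 2) * (p * (p - q) + ⟪g, g - g'⟫)
        - φ ((q ^ 2 + ‖g'‖ ^ 2) / 2) * (q * (p - q) + ⟪g', g - g'⟫) = 0 → p = q ∧ g = g') := by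
  set a : ℝ := Real.sqrt (p ^ 2 + ‖g‖ ^ 2) with ha_def
  set a' : ℝ := Real.sqrt (q ^ 2 + ‖g'‖ ^ 2) with ha'_def
  have ha2 : a ^ 2 = p ^ 2 + ‖g‖ ^ 2 := Real.sq_sqrt (by positivity)
  have ha'2 : a' ^ 2 = q ^ 2 + ‖g'‖ ^ 2 := Real.sq_sqrt (by positivity)
  have ha0 : 0 ≤ a := Real.sqrt_nonneg _
  have ha'0 : 0 ≤ a' := Real.sqrt_nonneg _
  set T : ℝ := p * q + ⟪g, g'⟫ with hT_def
  -- Cauchy-Schwarz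
  have hcs : ⟪g, g'⟫ ≤ ‖g‖ * ‖g'‖ := real_inner_le_norm g g'
  have h1 : (p * q + ‖g‖ * ‖g'‖) ^ 2 ≤ (p ^ 2 + ‖g‖ ^ 2) * (q ^ 2 + ‖g'‖ ^ 2) := by
    nlinarith [sq_nonneg (p * ‖g'‖ - q * ‖g‖)]
  have h2 : p * q + ‖g‖ * ‖g'‖ ≤ a * a' := by
    rw [ha_def, ha'_def, ← Real.sqrt_mul (by positivity)]
    calc p * q + ‖g‖ * ‖g'‖ ≤ |p * q + ‖g‖ * ‖g'‖| := le_abs_self _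
      _ = Real.sqrt ((p * q + ‖g‖ * ‖g'‖) ^ 2) := (Real.sqrt_sq_eq_abs _).symm
      _ ≤ _ := Real.sqrt_le_sqrt h1
  have hT : T ≤ a * a' := by
    simp only [hT_def]; linarith
  clear_value a a'
  -- rewrite the expression
  set φa : ℝ := φ ((p ^ 2 + ‖g‖ ^ 2) / 2) with hφa_def
  set φa' : ℝ := φ ((q ^ 2 + ‖g'‖ ^ 2) / 2) with hφa'_def
  have hφa : φ0 ≤ φa := hb _ (by positivity)
  have hφa' : φ0 ≤ φa' := hb _ (by positivity)
  have hφeq : φ (a ^ 2 / 2) = φa := by rw [ha2]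
  have hφeq' : φ (a' ^ 2 / 2) = φa' := by rw [ha'2]
  clear_value T φa φa'
  have hinner1 : ⟪g, g - g'⟫ = ‖g‖ ^ 2 - ⟪g, g'⟫ := by
    rw [inner_sub_right, real_inner_self_eq_norm_sq]
  have hinner2 : ⟪g', g - g'⟫ = ⟪g, g'⟫ - ‖g'‖ ^ 2 := by
    rw [inner_sub_right, real_inner_self_eq_norm_sq, real_inner_comm]
  have hA : φa * (p * (p - q) + ⟪g, g - g'⟫) - φa' * (q * (p - q) + ⟪g', g - g'⟫)
      = φa * (a ^ 2 - T) + φa' * (a' ^ 2 - T) := by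
    rw [hinner1, hinner2, ha2, ha'2, hT_def]; ring
  -- the ψ term
  have hψ0 : 0 ≤ (a - a') * (a * φa - a' * φa') := by
    rcases lt_trichotomy a a' with h | h | h
    · have h5 : a * φ (a ^ 2 / 2) < a' * φ (a' ^ 2 / 2) := hmono ha0 ha'0 h
      rw [hφeq, hφeq'] at h5
      have := mul_nonneg (neg_nonneg.mpr (by linarith : a - a' ≤ 0))
        (neg_nonneg.mpr (by linarith : a * φa - a' * φa' ≤ 0))
      rw [neg_mul_neg] at this
      exact this
    · rw [h, sub_self, zero_mul]
    · have h5 : a' * φ (a' ^ 2 / 2) < a * φ (a ^ 2 / 2) := hmono ha'0 ha0 h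
      rw [hφeq, hφeq'] at h5
      exact mul_nonneg (by linarith) (by linarith)
  have hgap : φa * (a ^ 2 - T) + φa' * (a' ^ 2 - T)
      = (a * a' - T) * (φa + φa') + (a - a') * (a * φa - a' * φa') := by ring
  have hnn : 0 ≤ φa * (a ^ 2 - T) + φa' * (a' ^ 2 - T) := by
    rw [hgap]
    have : 0 ≤ (a * a' - T) * (φa + φa') := by
      apply mul_nonneg (by linarith) (by linarith)
    linarith
  constructor
  · rw [hA]; exact hnn
  · intro hz
    rw [hA, hgap] at hz
    have hX : 0 ≤ (a * a' - T) * (φa + φa') :=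
      mul_nonneg (by linarith) (by linarith)
    have hz1 : (a * a' - T) * (φa + φa') = 0 ∧ (a - a') * (a * φa - a' * φa') = 0 :=
      ⟨by linarith, by linarith⟩
    -- a = a'
    have haa : a = a' := by
      by_contra hne
      rcases lt_or_gt_of_ne hne with h | h
      · have h5 : a * φ (a ^ 2 / 2) < a' * φ (a' ^ 2 / 2) := hmono ha0 ha'0 h
        rw [hφeq, hφeq'] at h5
        have hp : (a - a') * (a * φa - a' * φa') > 0 :=
          mul_pos_of_neg_of_neg (by linarith) (by linarith)
        linarith [hz1.2]
      · have h5 : a' * φ (a' ^ 2 / 2) < a * φ (a ^ 2 / 2) := hmono ha'0 ha0 h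
        rw [hφeq, hφeq'] at h5
        have hp : (a - a') * (a * φa - a' * φa') > 0 :=
          mul_pos (by linarith) (by linarith)
        linarith [hz1.2]
    have hTaa : T = a * a' := by
      have h3 := hz1.1
      rcases mul_eq_zero.mp h3 with h | h
      · linarith
      · linarith
    have hdist : (p - q) ^ 2 + ‖g - g'‖ ^ 2 = 0 := by
      have hns : ‖g - g'‖ ^ 2 = ‖g‖ ^ 2 - 2 * ⟪g, g'⟫ + ‖g'‖ ^ 2 := norm_sub_sq_real g g'
      have hthis : p * q + ⟪g, g'⟫ = a * a' := by
        rw [← hT_def]; exact hTaa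
      have hsum : (p - q) ^ 2 + ‖g - g'‖ ^ 2 = (a - a') ^ 2 := by
        rw [hns]; linear_combination -ha2 - ha'2 - 2 * hthis
      rw [hsum, haa, sub_self]
      norm_num
    constructor
    · have h6 : (p - q) ^ 2 = 0 := by
        linarith [sq_nonneg (p - q), sq_nonneg ‖g - g'‖]
      have := sq_eq_zero_iff.mp h6
      linarith
    · have h6 : ‖g - g'‖ ^ 2 = 0 := by
        linarith [sq_nonneg (p - q), sq_nonneg ‖g - g'‖]
      have h7 := sq_eq_zero_iff.mp h6
      rw [norm_eq_zero] at h7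
      exact sub_eq_zero.mp h7

theorem stmt5 (N : ℕ) (Ω : Set (EuclideanSpace ℝ (Fin N)))
    (hΩo : IsOpen Ω) (hΩb : Bornology.IsBounded Ω)
    (φ₁ φ₂ : ℝ → ℝ) (φ₁0 φ₁m φ₂0 φ₂m : ℝ) (h10 : 0 < φ₁0) (h20 : 0 < φ₂0)
    (hc1 : ContinuousOn φ₁ (Set.Ici 0)) (hc2 : ContinuousOn φ₂ (Set.Ici 0))
    (hb1 : ∀ s : ℝ, 0 ≤ s → φ₁0 ≤ φ₁ s ∧ φ₁ s ≤ φ₁m)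
    (hb2 : ∀ s : ℝ, 0 ≤ s → φ₂0 ≤ φ₂ s ∧ φ₂ s ≤ φ₂m)
    (Φ₁ Φ₂ : ℝ → ℝ)
    (hΦ₁ : ∀ s, Φ₁ s = ∫ τ in (0:ℝ)..s, φ₁ τ)
    (hΦ₂ : ∀ s, Φ₂ s = ∫ τ in (0:ℝ)..s, φ₂ τ)
    (hconv1 : StrictConvexOn ℝ Set.univ (fun s : ℝ => Φ₁ (s ^ 2)))
    (hconv2 : StrictConvexOn ℝ Set.univ (fun s : ℝ => Φ₂ (s ^ 2))) :
    ∀ (u v u' v' : EuclideanSpace ℝ (Fin N) → ℝ)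
      (gu gv gu' gv' : EuclideanSpace ℝ (Fin N) → EuclideanSpace ℝ (Fin N)),
      MemLp u 2 (volume.restrict Ω) → MemLp v 2 (volume.restrict Ω) →
      MemLp u' 2 (volume.restrict Ω) → MemLp v' 2 (volume.restrict Ω) →
      MemLp gu 2 (volume.restrict Ω) → MemLp gv 2 (volume.restrict Ω) →
      MemLp gu' 2 (volume.restrict Ω) → MemLp gv' 2 (volume.restrict Ω) →
      Integrable (monoIntegrand φ₁ φ₂ u v u' v' gu gv gu' gv') (volume.restrict Ω) →
      ¬ (u =ᶠ[ae (volume.restrict Ω)] u' ∧ gu =ᶠ[ae (volume.restrict Ω)] gu'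
          ∧ v =ᶠ[ae (volume.restrict Ω)] v' ∧ gv =ᶠ[ae (volume.restrict Ω)] gv') →
      0 < ∫ x in Ω, monoIntegrand φ₁ φ₂ u v u' v' gu gv gu' gv' x := by
  intro u v u' v' gu gv gu' gv' _ _ _ _ _ _ _ _ hint hne
  have hm1 := psi_strictMonoOn φ₁ φ₁0 h10 hc1 (fun s hs => (hb1 s hs).1) Φ₁ hΦ₁ hconv1
  have hm2 := psi_strictMonoOn φ₂ φ₂0 h20 hc2 (fun s hs => (hb2 s hs).1) Φ₂ hΦ₂ hconv2
  have hkey : ∀ x, 0 ≤ monoIntegrand φ₁ φ₂ u v u' v' gu gv gu' gv' x ∧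
      (monoIntegrand φ₁ φ₂ u v u' v' gu gv gu' gv' x = 0 →
        u x = u' x ∧ gu x = gu' x ∧ v x = v' x ∧ gv x = gv' x) := by
    intro x
    obtain ⟨hA1, hA1z⟩ := key_pointwise φ₁ φ₁0 h10 (fun s hs => (hb1 s hs).1) hm1
      (u x) (u' x) (gu x) (gu' x)
    obtain ⟨hA2, hA2z⟩ := key_pointwise φ₂ φ₂0 h20 (fun s hs => (hb2 s hs).1) hm2
      (v x) (v' x) (gv x) (gv' x)
    have hdef : monoIntegrand φ₁ φ₂ u v u' v' gu gv gu' gv' x =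
        (φ₁ ((u x ^ 2 + ‖gu x‖ ^ 2) / 2) * (u x * (u x - u' x) + ⟪gu x, gu x - gu' x⟫)
          - φ₁ ((u' x ^ 2 + ‖gu' x‖ ^ 2) / 2) * (u' x * (u x - u' x) + ⟪gu' x, gu x - gu' x⟫))
        + (φ₂ ((v x ^ 2 + ‖gv x‖ ^ 2) / 2) * (v x * (v x - v' x) + ⟪gv x, gv x - gv' x⟫)
          - φ₂ ((v' x ^ 2 + ‖gv' x‖ ^ 2) / 2) * (v' x * (v x - v' x) + ⟪gv' x, gv x - gv' x⟫)) := by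
      simp only [monoIntegrand]; ring
    rw [hdef]
    refine ⟨add_nonneg hA1 hA2, fun h0x => ?_⟩
    have e1 := hA1z (by linarith)
    have e2 := hA2z (by linarith)
    exact ⟨e1.1, e1.2, e2.1, e2.2⟩
  have hnonneg : 0 ≤ ∫ x in Ω, monoIntegrand φ₁ φ₂ u v u' v' gu gv gu' gv' x :=
    integral_nonneg fun x => (hkey x).1
  rcases hnonneg.eq_or_lt with h | h
  · exfalso
    have hz : monoIntegrand φ₁ φ₂ u v u' v' gu gv gu' gv' =ᶠ[ae (volume.restrict Ω)] 0 :=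
      (integral_eq_zero_iff_of_nonneg (fun x => (hkey x).1) hint).mp h.symm
    have hall : ∀ᵐ x ∂(volume.restrict Ω),
        u x = u' x ∧ gu x = gu' x ∧ v x = v' x ∧ gv x = gv' x :=
      hz.mono fun x hx => (hkey x).2 (by simpa using hx)
    exact hne ⟨hall.mono fun x hx => hx.1, hall.mono fun x hx => hx.2.1,
      hall.mono fun x hx => hx.2.2.1, hall.mono fun x hx => hx.2.2.2⟩
  · exact h
end
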